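/- Let d > 0 and f ∈ ℛ_d with f ≠ 0. Then: (a) M_f is a K-linear subspace of Mat_r(K) containing the identity matrix; (b) γ_f : M_f → ℛ_d is K-linear; (c) dim_K ker γ_f = r·β_{11}(f) and dim_K im γ_f = 1 + β_{1d}(f); (d) dim_K M_f = 1 + β_{1d}(f) + r·β_{11}(f). -/

import Mathlib

open MvPolynomial

namespace Kleppe

noncomputable section

open scoped Classical

variable {K : Type*}

/-- The iterated partial-derivative operator `∂^β` applied to `f`
(in the standard polynomial ring; char 0 identification of divided powers). -/
def derivMulti [CommSemiring K] {r : ℕ} (β : Fin r →₀ ℕ) (f : MvPolynomial (Fin r) K) :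
    MvPolynomial (Fin r) K :=
  ∑ α ∈ f.support,
    if β ≤ α then
      MvPolynomial.monomial (α - β)
        ((∏ i : Fin r, (α i).descFactorial (β i)) • MvPolynomial.coeff α f)
    else 0

/-- The apolarity action `D(f)` of a differential operator `D ∈ R = K[∂_1,…,∂_r]`
on a polynomial `f ∈ ℛ = K[x_1,…,x_r]`; `∂_i` acts as `∂/∂x_i`. -/
def contract [CommSemiring K] {r : ℕ} (D f : MvPolynomial (Fin r) K) :
    MvPolynomial (Fin r) K :=
  ∑ β ∈ D.support, MvPolynomial.coeff β D • derivMulti β f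

/-- `(A∂)_i = Σ_k A_{ik} ∂_k`, as an element of `R`. -/
def rowOp [CommSemiring K] {r : ℕ} (A : Matrix (Fin r) (Fin r) K) (i : Fin r) :
    MvPolynomial (Fin r) K :=
  ∑ k : Fin r, A i k • X k

/-- The matrix space `M_f = {A | ∂_i·(A∂)_j − ∂_j·(A∂)_i ∈ ann_R f for all i,j}`. -/
def Mf [CommRing K] {r : ℕ} (f : MvPolynomial (Fin r) K) :
    Set (Matrix (Fin r) (Fin r) K) :=
  {A | ∀ i j : Fin r, contract (X i * rowOp A j - X j * rowOp A i) f = 0}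

/-- `γ_f(A)`: the unique homogeneous `g` of degree `d` with `∂_i g = (A∂)_i (f)` for all `i`
(defined by choice; junk value `0` if no such `g` exists). -/
def gammaf [CommRing K] {r : ℕ} (d : ℕ) (f : MvPolynomial (Fin r) K)
    (A : Matrix (Fin r) (Fin r) K) : MvPolynomial (Fin r) K :=
  if h : ∃ g : MvPolynomial (Fin r) K, g.IsHomogeneous d ∧
      ∀ i, contract (X i) g = contract (rowOp A i) f then h.choose else 0

/-- `R_e(g)`, the space of contractions of `g` by homogeneous operators of degree `e`. -/
def partials [CommRing K] {r : ℕ} (e : ℕ) (g : MvPolynomial (Fin r) K) :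
    Submodule K (MvPolynomial (Fin r) K) :=
  Submodule.span K {p | ∃ D : MvPolynomial (Fin r) K, D.IsHomogeneous e ∧ p = contract D g}

/-- `G` is (the set of components of) a regular splitting of `f`:
`f = Σ_{g ∈ G} g`, each `g` a nonzero degree-`d` form, and the spaces of
`(d−1)`-st partials `R_{d−1}(g)` are independent. -/
def IsRegSplit [CommRing K] {r : ℕ} (d : ℕ) (f : MvPolynomial (Fin r) K)
    (G : Set (MvPolynomial (Fin r) K)) : Prop :=
  G.Finite ∧ G.Nonempty ∧ (∀ g ∈ G, g ≠ 0 ∧ g.IsHomogeneous d) ∧ (∑ᶠ g ∈ G, g) = f ∧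
  ∀ g ∈ G, Disjoint (partials (d - 1) g) (⨆ h ∈ G \ {g}, partials (d - 1) h)

/-- A complete set of orthogonal idempotents in `M_f`. -/
def IsCoid [CommRing K] {r : ℕ} (f : MvPolynomial (Fin r) K)
    (E : Set (Matrix (Fin r) (Fin r) K)) : Prop :=
  E.Finite ∧ E ⊆ Mf f ∧ (∀ A ∈ E, A ≠ 0) ∧
  (∀ A ∈ E, ∀ B ∈ E, A ≠ B → A * B = 0) ∧ (∑ᶠ A ∈ E, A) = 1

end

noncomputable section

section Lemmas

open MvPolynomial Finsupp

variable {K : Type*} {r : ℕ}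

section CommSemiringK
variable [CommSemiring K]

theorem coeff_derivMulti (β δ : Fin r →₀ ℕ) (f : MvPolynomial (Fin r) K) :
    MvPolynomial.coeff δ (derivMulti β f) =
      (∏ i : Fin r, (δ i + β i).descFactorial (β i)) • MvPolynomial.coeff (δ + β) f := by
  classical
  rw [derivMulti, MvPolynomial.coeff_sum]
  rw [Finset.sum_eq_single (δ + β)]
  · by_cases h : δ + β ∈ f.support
    · rw [if_pos le_add_self, add_tsub_cancel_right, coeff_monomial, if_pos rfl]
      simp [Finsupp.add_apply]
    · rw [MvPolynomial.notMem_support_iff] at h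
      rw [h, smul_zero]
      split <;> simp [coeff_monomial]
  · intro b _ hb
    split
    · rename_i hle
      rw [coeff_monomial, if_neg]
      intro he
      exact hb (by rw [← he, tsub_add_cancel_of_le hle])
    · rfl
  · intro h
    rw [MvPolynomial.notMem_support_iff] at h
    simp [h]

end CommSemiringK
end Lemmas

section Lemmas2
open MvPolynomial Finsupp
variable {K : Type*} {r : ℕ}
section CS
variable [CommSemiring K]

theorem derivMulti_add (β : Fin r →₀ ℕ) (f g : MvPolynomial (Fin r) K) :
    derivMulti β (f + g) = derivMulti β f + derivMulti β g := by
  ext δ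
  simp [coeff_derivMulti, coeff_add, smul_add]

theorem derivMulti_smul (β : Fin r →₀ ℕ) (c : K) (f : MvPolynomial (Fin r) K) :
    derivMulti β (c • f) = c • derivMulti β f := by
  ext δ
  simp only [coeff_derivMulti, MvPolynomial.coeff_smul, smul_eq_mul, nsmul_eq_mul]
  ring

theorem derivMulti_zero (β : Fin r →₀ ℕ) :
    derivMulti β (0 : MvPolynomial (Fin r) K) = 0 := by
  ext δ; simp [coeff_derivMulti]

theorem coeff_contract (D f : MvPolynomial (Fin r) K) (δ : Fin r →₀ ℕ) :
    MvPolynomial.coeff δ (contract D f) = ∑ β ∈ D.support,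
      MvPolynomial.coeff β D *
        ((∏ i : Fin r, (δ i + β i).descFactorial (β i)) • MvPolynomial.coeff (δ + β) f) := by
  rw [contract, MvPolynomial.coeff_sum]
  exact Finset.sum_congr rfl fun β _ => by rw [MvPolynomial.coeff_smul, coeff_derivMulti]; rfl

theorem coeff_contract_superset {D : MvPolynomial (Fin r) K} {S : Finset (Fin r →₀ ℕ)}
    (hS : D.support ⊆ S) (f : MvPolynomial (Fin r) K) (δ : Fin r →₀ ℕ) :
    MvPolynomial.coeff δ (contract D f) = ∑ β ∈ S,
      MvPolynomial.coeff β D *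
        ((∏ i : Fin r, (δ i + β i).descFactorial (β i)) • MvPolynomial.coeff (δ + β) f) := by
  rw [coeff_contract]
  refine Finset.sum_subset hS fun β _ hβ => ?_
  rw [MvPolynomial.notMem_support_iff] at hβ
  rw [hβ, zero_mul]

theorem contract_add_left (D E f : MvPolynomial (Fin r) K) :
    contract (D + E) f = contract D f + contract E f := by
  classical
  ext δ
  rw [coeff_add,
    coeff_contract_superset (S := D.support ∪ E.support) MvPolynomial.support_add,
    coeff_contract_superset (S := D.support ∪ E.support) Finset.subset_union_left,
    coeff_contract_superset (S := D.support ∪ E.support) Finset.subset_union_right,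
    ← Finset.sum_add_distrib]
  exact Finset.sum_congr rfl fun β _ => by rw [coeff_add, add_mul]

theorem contract_smul_left (c : K) (D f : MvPolynomial (Fin r) K) :
    contract (c • D) f = c • contract D f := by
  ext δ
  rw [MvPolynomial.coeff_smul,
    coeff_contract_superset (S := D.support) MvPolynomial.support_smul,
    coeff_contract]
  simp only [MvPolynomial.coeff_smul, smul_eq_mul, nsmul_eq_mul, Finset.mul_sum]
  exact Finset.sum_congr rfl fun β _ => by ring

theorem contract_zero_left (f : MvPolynomial (Fin r) K) : contract 0 f = 0 := by
  ext δ; simp [coeff_contract]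

theorem contract_add_right (D f g : MvPolynomial (Fin r) K) :
    contract D (f + g) = contract D f + contract D g := by
  ext δ; simp [coeff_contract, coeff_add, smul_add, mul_add, Finset.sum_add_distrib]

theorem contract_smul_right (c : K) (D f : MvPolynomial (Fin r) K) :
    contract D (c • f) = c • contract D f := by
  ext δ
  simp only [coeff_contract, MvPolynomial.coeff_smul, Finset.mul_sum, smul_eq_mul, nsmul_eq_mul]
  exact Finset.sum_congr rfl fun β _ => by ring

theorem contract_zero_right (D : MvPolynomial (Fin r) K) : contract D 0 = 0 := by
  ext δ; simp [coeff_contract]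

theorem contract_monomial (β : Fin r →₀ ℕ) (b : K) (f : MvPolynomial (Fin r) K) :
    contract (MvPolynomial.monomial β b) f = b • derivMulti β f := by
  classical
  by_cases hb : b = 0
  · simp [hb, contract_zero_left]
  · rw [contract, MvPolynomial.support_monomial, if_neg hb, Finset.sum_singleton,
      MvPolynomial.coeff_monomial, if_pos rfl]

theorem Nat.descFactorial_add_eq (n b c : ℕ) :
    (n + b + c).descFactorial (b + c) = (n + b + c).descFactorial c * (n + b).descFactorial b := by
  induction c with
  | zero => simp
  | succ c ih =>
    have h1 : n + b + (c + 1) = (n + b + c) + 1 := by ring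
    rw [h1, show b + (c + 1) = (b + c) + 1 from rfl, Nat.succ_descFactorial_succ,
      Nat.succ_descFactorial_succ, ih, mul_assoc]

theorem derivMulti_derivMulti (β γ : Fin r →₀ ℕ) (f : MvPolynomial (Fin r) K) :
    derivMulti β (derivMulti γ f) = derivMulti (β + γ) f := by
  ext δ
  rw [coeff_derivMulti, coeff_derivMulti, coeff_derivMulti, smul_smul, ← add_assoc,
    ← Finset.prod_mul_distrib]
  congr 1
  refine Finset.prod_congr rfl fun i _ => ?_
  simp only [Finsupp.add_apply]
  rw [← add_assoc, Nat.descFactorial_add_eq (δ i) (β i) (γ i), mul_comm]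

theorem contract_mul (D E f : MvPolynomial (Fin r) K) :
    contract (D * E) f = contract D (contract E f) := by
  induction D using MvPolynomial.induction_on' with
  | add p q hp hq => rw [add_mul, contract_add_left, contract_add_left, hp, hq]
  | monomial β b =>
    induction E using MvPolynomial.induction_on' with
    | add p q hp hq =>
      rw [mul_add, contract_add_left, hp, hq, contract_add_left p q f, contract_add_right]
    | monomial γ c =>
      rw [MvPolynomial.monomial_mul, contract_monomial, contract_monomial, contract_monomial,
        derivMulti_smul, smul_smul, derivMulti_derivMulti]

end CS
end Lemmas2

section Lemmas3
open MvPolynomial Finsupp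
variable {K : Type*} {r : ℕ}
section CS
variable [CommSemiring K]

theorem contract_X (i : Fin r) (f : MvPolynomial (Fin r) K) :
    contract (X i) f = derivMulti (Finsupp.single i 1) f := by
  rw [X, contract_monomial, one_smul]

theorem coeff_contract_X (i : Fin r) (f : MvPolynomial (Fin r) K) (δ : Fin r →₀ ℕ) :
    MvPolynomial.coeff δ (contract (X i) f) =
      (δ i + 1) • MvPolynomial.coeff (δ + Finsupp.single i 1) f := by
  classical
  rw [contract_X, coeff_derivMulti]
  congr 1
  rw [Finset.prod_eq_single i]
  · simp
  · intro j _ hj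
    simp [Finsupp.single_apply, (Ne.symm hj)]
  · simp

theorem contract_X_eq_pderiv (i : Fin r) (f : MvPolynomial (Fin r) K) :
    contract (X i) f = MvPolynomial.pderiv i f := by
  classical
  induction f using MvPolynomial.induction_on' with
  | add p q hp hq => rw [contract_add_right, map_add, hp, hq]
  | monomial α c =>
    ext δ
    rw [coeff_contract_X, MvPolynomial.pderiv_monomial]
    by_cases hα : α i = 0
    · rw [hα, Nat.cast_zero, mul_zero, map_zero, MvPolynomial.coeff_zero,
        MvPolynomial.coeff_monomial, if_neg, smul_zero]
      intro he
      have : α i = δ i + 1 := by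
        rw [he, Finsupp.add_apply, Finsupp.single_apply, if_pos rfl]
      omega
    · have hle : Finsupp.single i 1 ≤ α := Finsupp.single_le_iff.mpr (by omega)
      by_cases he : α = δ + Finsupp.single i 1
      · rw [MvPolynomial.coeff_monomial, if_pos he, MvPolynomial.coeff_monomial, if_pos
          (by rw [he, add_tsub_cancel_right]), nsmul_eq_mul]
        have hδi : α i = δ i + 1 := by
          rw [he, Finsupp.add_apply, Finsupp.single_apply, if_pos rfl]
        rw [hδi]
        push_cast
        ring
      · rw [MvPolynomial.coeff_monomial, if_neg he, smul_zero, MvPolynomial.coeff_monomial,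
          if_neg]
        intro hx
        exact he (by rw [← hx, tsub_add_cancel_of_le hle])

theorem contract_X_mul (i : Fin r) (E f : MvPolynomial (Fin r) K) :
    contract (X i * E) f = contract (X i) (contract E f) := contract_mul _ _ _

end CS

section Homog
variable [CommSemiring K]

theorem isHomogeneous_derivMulti {f : MvPolynomial (Fin r) K} {d : ℕ}
    (hf : f.IsHomogeneous d) (β : Fin r →₀ ℕ) {e : ℕ} (hβ : β.degree = e) :
    (derivMulti β f).IsHomogeneous (d - e) := by
  intro δ hδ
  rw [coeff_derivMulti] at hδ
  have h2 : MvPolynomial.coeff (δ + β) f ≠ 0 := by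
    intro h
    rw [h, smul_zero] at hδ
    exact hδ rfl
  have h3 := hf h2
  rw [map_add] at h3
  have hβ' : (Finsupp.weight 1) β = e := by
    rw [Finsupp.degree_eq_weight_one] at hβ; exact hβ
  rw [hβ'] at h3
  omega

theorem isHomogeneous_contract {D f : MvPolynomial (Fin r) K} {d e : ℕ}
    (hD : D.IsHomogeneous e) (hf : f.IsHomogeneous d) :
    (contract D f).IsHomogeneous (d - e) := by
  rw [contract, ← mem_homogeneousSubmodule]
  refine Submodule.sum_mem _ fun β hβ => Submodule.smul_mem _ _ ?_
  rw [mem_homogeneousSubmodule]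
  refine isHomogeneous_derivMulti hf β ?_
  have := hD (MvPolynomial.mem_support_iff.mp hβ)
  rw [Finsupp.degree_eq_weight_one]
  exact this

theorem isHomogeneous_rowOp {A : Matrix (Fin r) (Fin r) K} (i : Fin r) :
    (rowOp A i).IsHomogeneous 1 := by
  rw [rowOp, ← mem_homogeneousSubmodule]
  exact Submodule.sum_mem _ fun k _ => Submodule.smul_mem _ _
    (by rw [mem_homogeneousSubmodule]; exact MvPolynomial.isHomogeneous_X _ _)

/-- A homogeneous polynomial of degree zero is a constant. -/
theorem isHomogeneous_zero_eq_C {p : MvPolynomial (Fin r) K} (hp : p.IsHomogeneous 0) :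
    p = MvPolynomial.C (MvPolynomial.coeff 0 p) := by
  ext δ
  by_cases h : δ = 0
  · subst h; simp
  · rw [MvPolynomial.coeff_C, if_neg (fun hx => h hx.symm)]
    refine hp.coeff_eq_zero ?_
    rw [Ne, Finsupp.degree_eq_zero_iff]
    exact h

theorem Finsupp.degree_eq_one_exists {δ : Fin r →₀ ℕ} (h : δ.degree = 1) :
    ∃ k, δ = Finsupp.single k 1 := by
  classical
  have hne : δ ≠ 0 := by
    intro h0
    rw [h0, map_zero] at h
    omega
  obtain ⟨k, hk⟩ := Finsupp.ne_iff.mp hne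
  rw [Finsupp.coe_zero, Pi.zero_apply] at hk
  refine ⟨k, ?_⟩
  ext j
  rw [Finsupp.single_apply]
  by_cases hj : k = j
  · subst hj
    have h1 : δ k ≤ 1 := h ▸ Finsupp.le_degree k δ
    rw [if_pos rfl]
    omega
  · rw [if_neg hj]
    by_contra hcon
    have hsub : ({k, j} : Finset (Fin r)) ⊆ δ.support := by
      intro x hx
      rcases Finset.mem_insert.mp hx with rfl | hx
      · exact Finsupp.mem_support_iff.mpr hk
      · rw [Finset.mem_singleton] at hx
        subst hx
        exact Finsupp.mem_support_iff.mpr hcon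
    have h2 := Finset.sum_le_sum_of_subset (f := δ) hsub
    rw [Finset.sum_pair hj] at h2
    rw [Finsupp.degree_apply] at h
    omega

/-- A homogeneous polynomial of degree one is determined by coefficients of the `X k`. -/
theorem isHomogeneous_one_rep {p : MvPolynomial (Fin r) K} (hp : p.IsHomogeneous 1) :
    p = ∑ k : Fin r, MvPolynomial.coeff (Finsupp.single k 1) p • X k := by
  classical
  ext δ
  rw [MvPolynomial.coeff_sum]
  simp only [MvPolynomial.coeff_smul, MvPolynomial.coeff_X', smul_eq_mul, mul_ite, mul_one,
    mul_zero]
  by_cases h : ∃ k, δ = Finsupp.single k 1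
  · obtain ⟨k, rfl⟩ := h
    rw [Finset.sum_eq_single k]
    · rw [if_pos rfl]
    · intro j _ hj
      rw [if_neg]
      intro hx
      have := DFunLike.congr_fun hx j
      simp [Finsupp.single_apply, Ne.symm hj] at this
    · simp
  · rw [Finset.sum_eq_zero, hp.coeff_eq_zero]
    · intro hdeg
      obtain ⟨k, hk⟩ := Finsupp.degree_eq_one_exists hdeg
      exact h ⟨k, hk⟩
    · intro j _
      rw [if_neg]
      intro hx
      exact h ⟨j, hx.symm⟩

end Homog
end Lemmas3

section Lemmas4
open MvPolynomial Finsupp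
variable {K : Type*} {r : ℕ}
section CS
variable [CommSemiring K]

/-- Euler's identity. -/
theorem euler_identity {n : ℕ} {g : MvPolynomial (Fin r) K} (hg : g.IsHomogeneous n) :
    ∑ i : Fin r, X i * contract (X i) g = n • g := by
  classical
  ext δ
  rw [MvPolynomial.coeff_sum]
  have hterm : ∀ i : Fin r, MvPolynomial.coeff δ (X i * contract (X i) g) =
      δ i • MvPolynomial.coeff δ g := by
    intro i
    rw [MvPolynomial.coeff_X_mul']
    by_cases h : i ∈ δ.support
    · rw [if_pos h, coeff_contract_X]
      have hle : Finsupp.single i 1 ≤ δ :=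
        Finsupp.single_le_iff.mpr (Nat.one_le_iff_ne_zero.mpr (Finsupp.mem_support_iff.mp h))
      rw [tsub_add_cancel_of_le hle]
      have hti : ((δ - Finsupp.single i 1 : Fin r →₀ ℕ) i) + 1 = δ i := by
        rw [Finsupp.tsub_apply, Finsupp.single_apply, if_pos rfl]
        have := Finsupp.single_le_iff.mp hle
        omega
      rw [hti]
    · rw [if_neg h]
      rw [Finsupp.notMem_support_iff] at h
      rw [h, zero_smul]
  simp only [hterm, MvPolynomial.coeff_smul]
  rw [← Finset.sum_smul]
  by_cases hc : MvPolynomial.coeff δ g = 0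
  · rw [hc, smul_zero, smul_zero]
  · have hdeg := hg hc
    have : ∑ i : Fin r, δ i = n := by
      rw [← hdeg]
      have : (Finsupp.weight 1) δ = δ.degree := by rw [Finsupp.degree_eq_weight_one]; rfl
      rw [this, Finsupp.degree_apply]
      exact (Finset.sum_subset (Finset.subset_univ _)
        (fun x _ hx => Finsupp.notMem_support_iff.mp hx)).symm
    rw [this]
end CS

section FieldK
variable [Field K] [CharZero K]

theorem homog_eq_of_contract_X_eq {n : ℕ} (hn : 0 < n) {g h : MvPolynomial (Fin r) K}
    (hg : g.IsHomogeneous n) (hh : h.IsHomogeneous n)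
    (he : ∀ i, contract (X i) g = contract (X i) h) : g = h := by
  have h1 : n • g = n • h := by
    rw [← euler_identity hg, ← euler_identity hh]
    exact Finset.sum_congr rfl fun i _ => by rw [he i]
  have h2 : (n : K) • g = (n : K) • h := by
    rw [Nat.cast_smul_eq_nsmul, Nat.cast_smul_eq_nsmul]
    exact h1
  have hn' : (n : K) ≠ 0 := Nat.cast_ne_zero.mpr hn.ne'
  exact smul_right_injective _ hn' h2

theorem homog_eq_zero_of_contract_X {n : ℕ} (hn : 0 < n) {g : MvPolynomial (Fin r) K}
    (hg : g.IsHomogeneous n) (he : ∀ i, contract (X i) g = 0) : g = 0 :=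
  homog_eq_of_contract_X_eq hn hg (MvPolynomial.isHomogeneous_zero _ _ _)
    (fun i => by rw [he i, contract_zero_right])

/-- Nondegeneracy of the apolarity pairing. -/
theorem homog_eq_zero_of_contract {e : ℕ} {g : MvPolynomial (Fin r) K}
    (hg : g.IsHomogeneous e)
    (h : ∀ D : MvPolynomial (Fin r) K, D.IsHomogeneous e → contract D g = 0) : g = 0 := by
  ext δ
  rw [MvPolynomial.coeff_zero]
  by_cases hc : MvPolynomial.coeff δ g = 0
  · exact hc
  exfalso
  have hdeg : δ.degree = e := by
    rw [Finsupp.degree_eq_weight_one]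
    exact hg hc
  have hD := h (MvPolynomial.monomial δ 1) (MvPolynomial.isHomogeneous_monomial 1 hdeg)
  rw [contract_monomial, one_smul] at hD
  have h0 := congrArg (MvPolynomial.coeff 0) hD
  rw [coeff_derivMulti, zero_add, MvPolynomial.coeff_zero] at h0
  have hfac : (∏ i : Fin r, ((0 : Fin r →₀ ℕ) i + δ i).descFactorial (δ i)) ≠ 0 := by
    refine Finset.prod_ne_zero_iff.mpr fun i _ => ?_
    simp only [Finsupp.coe_zero, Pi.zero_apply, zero_add, Nat.descFactorial_self]
    exact (Nat.factorial_pos _).ne'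
  rw [smul_eq_zero] at h0
  rcases h0 with h0 | h0
  · exact hfac h0
  · exact hc h0

end FieldK

section Symm
variable [CommSemiring K]

theorem coeff_zero_contract_comm (D f : MvPolynomial (Fin r) K) :
    MvPolynomial.coeff 0 (contract D f) = MvPolynomial.coeff 0 (contract f D) := by
  classical
  rw [coeff_contract_superset (S := D.support ∪ f.support) Finset.subset_union_left,
    coeff_contract_superset (S := D.support ∪ f.support) Finset.subset_union_right]
  refine Finset.sum_congr rfl fun β _ => ?_
  simp only [zero_add, Finsupp.coe_zero, Pi.zero_apply, nsmul_eq_mul]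
  ring

end Symm

section FinDim
variable [Field K]

instance homogeneousSubmodule_finiteDimensional (e : ℕ) :
    FiniteDimensional K ↥(homogeneousSubmodule (Fin r) K e) := by
  classical
  set T : Finset (Fin r →₀ ℕ) := (Finsupp.finite_of_degree_le (σ := Fin r) e).toFinset
  set F : Finset (MvPolynomial (Fin r) K) := T.image fun α => (MvPolynomial.monomial α (1 : K))
    with hF
  have hle : homogeneousSubmodule (Fin r) K e ≤ Submodule.span K (F : Set _) := by
    intro p hp
    rw [mem_homogeneousSubmodule] at hp
    have : p = ∑ α ∈ p.support, MvPolynomial.coeff α p • MvPolynomial.monomial α (1 : K) := by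
      conv_lhs => rw [← MvPolynomial.support_sum_monomial_coeff p]
      exact Finset.sum_congr rfl fun α _ => by
        rw [MvPolynomial.smul_monomial, smul_eq_mul, mul_one]
    rw [this]
    refine Submodule.sum_mem _ fun α hα => Submodule.smul_mem _ _ (Submodule.subset_span ?_)
    simp only [hF, Finset.coe_image, Set.mem_image, Finset.mem_coe]
    refine ⟨α, ?_, rfl⟩
    simp only [T, Set.Finite.mem_toFinset, Set.mem_setOf_eq]
    rw [Finsupp.degree_eq_weight_one]
    exact (hp (MvPolynomial.mem_support_iff.mp hα)).le
  have : FiniteDimensional K ↥(Submodule.span K (F : Set (MvPolynomial (Fin r) K))) :=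
    FiniteDimensional.span_finset K F
  exact Submodule.finiteDimensional_of_le hle

end FinDim
end Lemmas4

section Lemmas5
open MvPolynomial Finsupp
variable {K : Type*} {r : ℕ}

theorem contract_sub_left [CommRing K] (D E f : MvPolynomial (Fin r) K) :
    contract (D - E) f = contract D f - contract E f := by
  have h := contract_add_left (D - E) E f
  rw [sub_add_cancel] at h
  rw [h]
  abel

theorem contract_sum_right [CommSemiring K] {ι : Type*} (D : MvPolynomial (Fin r) K)
    (s : Finset ι) (F : ι → MvPolynomial (Fin r) K) :
    contract D (∑ i ∈ s, F i) = ∑ i ∈ s, contract D (F i) := by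
  classical
  induction s using Finset.induction_on with
  | empty => simp [contract_zero_right]
  | insert _ _ hns ih =>
    rw [Finset.sum_insert hns, Finset.sum_insert hns, contract_add_right, ih]

theorem rowOp_add [CommSemiring K] (A B : Matrix (Fin r) (Fin r) K) (i : Fin r) :
    rowOp (A + B) i = rowOp A i + rowOp B i := by
  simp [rowOp, Matrix.add_apply, add_smul, Finset.sum_add_distrib]

theorem rowOp_smul [CommSemiring K] (c : K) (A : Matrix (Fin r) (Fin r) K) (i : Fin r) :
    rowOp (c • A) i = c • rowOp A i := by
  simp [rowOp, Matrix.smul_apply, smul_eq_mul, mul_smul, Finset.smul_sum]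

theorem rowOp_zero [CommSemiring K] (i : Fin r) :
    rowOp (0 : Matrix (Fin r) (Fin r) K) i = 0 := by
  simp [rowOp]

theorem rowOp_one [CommSemiring K] (i : Fin r) :
    rowOp (1 : Matrix (Fin r) (Fin r) K) i = X i := by
  classical
  rw [rowOp, Finset.sum_eq_single i]
  · rw [Matrix.one_apply_eq, one_smul]
  · intro j _ hj
    rw [Matrix.one_apply_ne (Ne.symm hj), zero_smul]
  · simp

theorem one_mem_Mf [CommRing K] (f : MvPolynomial (Fin r) K) : 1 ∈ Mf f := by
  intro i j
  rw [rowOp_one, rowOp_one, mul_comm, sub_self, contract_zero_left]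

/-- `M_f` as a submodule of the matrix space. -/
def MfSub [CommRing K] (f : MvPolynomial (Fin r) K) :
    Submodule K (Matrix (Fin r) (Fin r) K) where
  carrier := Mf f
  zero_mem' := by
    intro i j
    rw [rowOp_zero, rowOp_zero, mul_zero, mul_zero, sub_self, contract_zero_left]
  add_mem' := by
    intro A B hA hB i j
    have he : X i * rowOp (A + B) j - X j * rowOp (A + B) i =
        (X i * rowOp A j - X j * rowOp A i) + (X i * rowOp B j - X j * rowOp B i) := by
      rw [rowOp_add, rowOp_add]
      ring
    rw [he, contract_add_left, hA i j, hB i j, add_zero]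
  smul_mem' := by
    intro c A hA i j
    have he : X i * rowOp (c • A) j - X j * rowOp (c • A) i =
        c • (X i * rowOp A j - X j * rowOp A i) := by
      rw [rowOp_smul, rowOp_smul, smul_sub, mul_smul_comm, mul_smul_comm]
    rw [he, contract_smul_left, hA i j, smul_zero]

/-- The annihilator in degree `e` as a submodule. -/
def annSub [CommSemiring K] (e : ℕ) (f : MvPolynomial (Fin r) K) :
    Submodule K (MvPolynomial (Fin r) K) where
  carrier := {D | D.IsHomogeneous e ∧ contract D f = 0}
  zero_mem' := ⟨MvPolynomial.isHomogeneous_zero _ _ _, contract_zero_left f⟩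
  add_mem' := by
    intro a b ha hb
    refine ⟨?_, by rw [contract_add_left, ha.2, hb.2, add_zero]⟩
    exact Submodule.add_mem (homogeneousSubmodule (Fin r) K e) ha.1 hb.1
  smul_mem' := by
    intro c a ha
    refine ⟨?_, by rw [contract_smul_left, ha.2, smul_zero]⟩
    exact Submodule.smul_mem (homogeneousSubmodule (Fin r) K e) _ ha.1

section FieldPart
variable [Field K] [CharZero K] {d : ℕ} {f : MvPolynomial (Fin r) K}

theorem Mf_symm [CharZero K] {A : Matrix (Fin r) (Fin r) K} (hA : A ∈ Mf f) (i j : Fin r) :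
    contract (X i) (contract (rowOp A j) f) = contract (X j) (contract (rowOp A i) f) := by
  have h := hA i j
  rw [contract_sub_left, sub_eq_zero, contract_X_mul, contract_X_mul] at h
  exact h

theorem exists_gamma (hd : 0 < d) (hf : f.IsHomogeneous d)
    {A : Matrix (Fin r) (Fin r) K} (hA : A ∈ Mf f) :
    ∃ g : MvPolynomial (Fin r) K, g.IsHomogeneous d ∧
      ∀ i, contract (X i) g = contract (rowOp A i) f := by
  classical
  set h : Fin r → MvPolynomial (Fin r) K := fun i => contract (rowOp A i) f with hh
  have hhom : ∀ i, (h i).IsHomogeneous (d - 1) := fun i =>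
    isHomogeneous_contract (isHomogeneous_rowOp i) hf
  refine ⟨(d : K)⁻¹ • ∑ i : Fin r, X i * h i, ?_, ?_⟩
  · rw [← mem_homogeneousSubmodule]
    refine Submodule.smul_mem _ _ (Submodule.sum_mem _ fun i _ => ?_)
    rw [mem_homogeneousSubmodule]
    have := (MvPolynomial.isHomogeneous_X K i).mul (hhom i)
    rwa [show 1 + (d - 1) = d by omega] at this
  · intro j
    rw [contract_smul_right]
    rw [contract_sum_right]
    have hterm : ∀ i : Fin r, contract (X j) (X i * h i) =
        (MvPolynomial.pderiv j (X i)) * h i + X i * contract (X i) (h j) := by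
      intro i
      rw [contract_X_eq_pderiv, MvPolynomial.pderiv_mul]
      congr 1
      rw [← contract_X_eq_pderiv]
      congr 1
      exact (Mf_symm hA i j).symm
    rw [Finset.sum_congr rfl fun i _ => hterm i, Finset.sum_add_distrib]
    have h1 : ∑ i : Fin r, (MvPolynomial.pderiv j (X i)) * h i = h j := by
      rw [Finset.sum_eq_single j]
      · rw [MvPolynomial.pderiv_X_self, one_mul]
      · intro i _ hi
        rw [MvPolynomial.pderiv_X_of_ne hi, zero_mul]
      · intro hj
        exact absurd (Finset.mem_univ j) hj
    have h2 : ∑ i : Fin r, X i * contract (X i) (h j) = (d - 1) • h j :=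
      euler_identity (hhom j)
    rw [h1, h2]
    have h3 : h j + (d - 1) • h j = ((d : ℕ) : K) • h j := by
      rw [Nat.cast_smul_eq_nsmul]
      rw [show d = (d - 1) + 1 by omega]
      rw [succ_nsmul]
      abel
    rw [h3, smul_smul, inv_mul_cancel₀ (by exact_mod_cast hd.ne' : (d : K) ≠ 0), one_smul]

theorem gammaf_spec (hd : 0 < d) (hf : f.IsHomogeneous d)
    {A : Matrix (Fin r) (Fin r) K} (hA : A ∈ Mf f) :
    (gammaf d f A).IsHomogeneous d ∧
      ∀ i, contract (X i) (gammaf d f A) = contract (rowOp A i) f := by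
  have hex := exists_gamma hd hf hA
  rw [gammaf, dif_pos hex]
  exact hex.choose_spec

theorem gammaf_unique (hd : 0 < d) (hf : f.IsHomogeneous d)
    {A : Matrix (Fin r) (Fin r) K} (hA : A ∈ Mf f) {g : MvPolynomial (Fin r) K}
    (hg : g.IsHomogeneous d) (hcon : ∀ i, contract (X i) g = contract (rowOp A i) f) :
    gammaf d f A = g := by
  have hs := gammaf_spec hd hf hA
  exact homog_eq_of_contract_X_eq hd hs.1 hg fun i => by rw [hs.2 i, hcon i]

theorem gammaf_linear (hd : 0 < d) (hf : f.IsHomogeneous d) (a b : K)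
    {A B : Matrix (Fin r) (Fin r) K} (hA : A ∈ Mf f) (hB : B ∈ Mf f) :
    gammaf d f (a • A + b • B) = a • gammaf d f A + b • gammaf d f B := by
  have hAB : a • A + b • B ∈ Mf f :=
    Submodule.add_mem (MfSub f) (Submodule.smul_mem _ _ hA) (Submodule.smul_mem _ _ hB)
  have hsA := gammaf_spec hd hf hA
  have hsB := gammaf_spec hd hf hB
  refine gammaf_unique hd hf hAB ?_ ?_
  · rw [← mem_homogeneousSubmodule]
    exact Submodule.add_mem _
      (Submodule.smul_mem _ _ ((mem_homogeneousSubmodule _ _).mpr hsA.1))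
      (Submodule.smul_mem _ _ ((mem_homogeneousSubmodule _ _).mpr hsB.1))
  · intro i
    rw [contract_add_right, contract_smul_right, contract_smul_right, hsA.2 i, hsB.2 i,
      rowOp_add, rowOp_smul, rowOp_smul, contract_add_left, contract_smul_left,
      contract_smul_left]

theorem gammaf_zero_iff (hd : 0 < d) (hf : f.IsHomogeneous d)
    {A : Matrix (Fin r) (Fin r) K} (hA : A ∈ Mf f) :
    gammaf d f A = 0 ↔ ∀ i, contract (rowOp A i) f = 0 := by
  constructor
  · intro h0 i
    have hs := gammaf_spec hd hf hA
    rw [← hs.2 i, h0, contract_zero_right]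
  · intro h0
    exact gammaf_unique hd hf hA (MvPolynomial.isHomogeneous_zero _ _ _)
      fun i => by rw [contract_zero_right, h0 i]

end FieldPart
end Lemmas5

section Lemmas6
open MvPolynomial Finsupp Module
variable {K : Type*} {r : ℕ}

theorem Set.finrank_submodule {M : Type*} [Field K] [AddCommGroup M] [Module K M]
    (p : Submodule K M) : Set.finrank K (p : Set M) = finrank K p := by
  rw [Set.finrank, Submodule.span_eq]

theorem coeff_rowOp [CommSemiring K] (A : Matrix (Fin r) (Fin r) K) (i k : Fin r) :
    MvPolynomial.coeff (Finsupp.single k 1) (rowOp A i) = A i k := by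
  classical
  rw [rowOp, MvPolynomial.coeff_sum]
  simp only [MvPolynomial.coeff_smul, MvPolynomial.coeff_X', smul_eq_mul, mul_ite, mul_one,
    mul_zero]
  rw [Finset.sum_eq_single k]
  · rw [if_pos rfl]
  · intro j _ hj
    rw [if_neg]
    intro hx
    exact hj (Finsupp.single_left_injective one_ne_zero hx)
  · simp

section FieldD
variable [Field K] [CharZero K]

/-- The kernel of `γ_f` as a submodule of the matrix space. -/
def kerSub (f : MvPolynomial (Fin r) K) : Submodule K (Matrix (Fin r) (Fin r) K) where
  carrier := {A | ∀ i, contract (rowOp A i) f = 0}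
  zero_mem' := fun i => by rw [rowOp_zero, contract_zero_left]
  add_mem' := fun {A B} hA hB i => by rw [rowOp_add, contract_add_left, hA i, hB i, add_zero]
  smul_mem' := fun c A hA i => by rw [rowOp_smul, contract_smul_left, hA i, smul_zero]

theorem kerSub_le_Mf (f : MvPolynomial (Fin r) K) : kerSub f ≤ MfSub f := by
  intro A hA i j
  rw [contract_sub_left, contract_X_mul, contract_X_mul, hA i, hA j, contract_zero_right,
    contract_zero_right, sub_zero]

theorem kerSet_eq (f : MvPolynomial (Fin r) K) :
    {A : Matrix (Fin r) (Fin r) K | A ∈ Mf f ∧ ∀ i, contract (rowOp A i) f = 0} =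
      (kerSub f : Set (Matrix (Fin r) (Fin r) K)) := by
  ext A
  exact ⟨fun h => h.2, fun h => ⟨kerSub_le_Mf f h, h⟩⟩

theorem annSub_le_homog (e : ℕ) (f : MvPolynomial (Fin r) K) :
    annSub e f ≤ homogeneousSubmodule (Fin r) K e := fun _ hD => hD.1

instance annSub_finiteDimensional (e : ℕ) (f : MvPolynomial (Fin r) K) :
    FiniteDimensional K ↥(annSub e f) :=
  Submodule.finiteDimensional_of_le (annSub_le_homog e f)

/-- The kernel is isomorphic to `r` copies of the degree-one annihilator. -/
def kerEquiv (f : MvPolynomial (Fin r) K) :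
    ↥(kerSub f) ≃ₗ[K] (Fin r → ↥(annSub 1 f)) := by
  refine LinearEquiv.ofBijective
    { toFun := fun A => fun i => ⟨rowOp A.1 i, isHomogeneous_rowOp i, A.2 i⟩
      map_add' := by
        intro A B
        funext i
        exact Subtype.ext (rowOp_add A.1 B.1 i)
      map_smul' := by
        intro c A
        funext i
        exact Subtype.ext (rowOp_smul c A.1 i) } ⟨?_, ?_⟩
  · intro A B hAB
    apply Subtype.ext
    ext i k
    have h := congrArg (fun v => ((v i : ↥(annSub 1 f)) : MvPolynomial (Fin r) K)) hAB
    change rowOp A.1 i = rowOp B.1 i at h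
    rw [← coeff_rowOp A.1 i k, ← coeff_rowOp B.1 i k]
    exact congrArg (MvPolynomial.coeff (Finsupp.single k 1)) h
  · intro v
    have hrep : ∀ i, rowOp (Matrix.of fun i k =>
        MvPolynomial.coeff (Finsupp.single k 1) ((v i : ↥(annSub 1 f)) : MvPolynomial (Fin r) K)) i
        = ((v i : ↥(annSub 1 f)) : MvPolynomial (Fin r) K) := by
      intro i
      rw [rowOp]
      exact (isHomogeneous_one_rep (v i).2.1).symm
    refine ⟨⟨Matrix.of fun i k =>
      MvPolynomial.coeff (Finsupp.single k 1) ((v i : ↥(annSub 1 f)) : MvPolynomial (Fin r) K),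
      fun i => by rw [hrep i]; exact (v i).2.2⟩, ?_⟩
    funext i
    exact Subtype.ext (hrep i)

theorem kerSub_finrank (f : MvPolynomial (Fin r) K) :
    finrank K ↥(kerSub f) = r * finrank K ↥(annSub 1 f) := by
  rw [LinearEquiv.finrank_eq (kerEquiv f), Module.finrank_pi_fintype, Finset.sum_const,
    Finset.card_univ, Fintype.card_fin, smul_eq_mul]

end FieldD
end Lemmas6

section Lemmas7
open MvPolynomial Finsupp Module
variable {K : Type*} {r : ℕ}

theorem contract_sub_right [CommRing K] (D f g : MvPolynomial (Fin r) K) :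
    contract D (f - g) = contract D f - contract D g := by
  have h := contract_add_right D (f - g) g
  rw [sub_add_cancel] at h
  rw [h]
  abel

theorem contract_sum_left [CommSemiring K] {ι : Type*} (s : Finset ι)
    (F : ι → MvPolynomial (Fin r) K) (f : MvPolynomial (Fin r) K) :
    contract (∑ i ∈ s, F i) f = ∑ i ∈ s, contract (F i) f := by
  classical
  induction s using Finset.induction_on with
  | empty => simp [contract_zero_left]
  | insert _ _ hns ih =>
    rw [Finset.sum_insert hns, Finset.sum_insert hns, contract_add_left, ih]

theorem contract_X_of_homog_one [CommSemiring K] {v : MvPolynomial (Fin r) K}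
    (hv : v.IsHomogeneous 1) (k : Fin r) :
    contract (X k) v = MvPolynomial.C (MvPolynomial.coeff (Finsupp.single k 1) v) := by
  have h0 : (contract (X k) v).IsHomogeneous 0 := by
    have := isHomogeneous_contract (MvPolynomial.isHomogeneous_X K k) hv
    simpa using this
  rw [isHomogeneous_zero_eq_C h0]
  congr 1
  rw [coeff_contract_X]
  simp

section FieldS7
variable [Field K] [CharZero K]

/-- The apolarity pairing on the space of degree-`d` forms. -/
def apolarForm (d : ℕ) : LinearMap.BilinForm K ↥(homogeneousSubmodule (Fin r) K d) :=
  LinearMap.mk₂ K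
    (fun p g => MvPolynomial.coeff 0 (contract (p : MvPolynomial (Fin r) K) g))
    (fun p p' g => by
      simp [contract_add_left, MvPolynomial.coeff_add])
    (fun c p g => by
      simp [contract_smul_left, MvPolynomial.coeff_smul])
    (fun p g g' => by
      simp [contract_add_right, MvPolynomial.coeff_add])
    (fun c p g => by
      simp [contract_smul_right, MvPolynomial.coeff_smul])

theorem apolarForm_apply (d : ℕ) (p g : ↥(homogeneousSubmodule (Fin r) K d)) :
    apolarForm d p g = MvPolynomial.coeff 0 (contract (p : MvPolynomial (Fin r) K) g) := rfl

theorem apolarForm_isRefl (d : ℕ) : (apolarForm (K := K) (r := r) d).IsRefl := by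
  intro p g h
  rw [apolarForm_apply, coeff_zero_contract_comm] at h
  exact h

theorem contract_eq_zero_iff {d : ℕ} {p g : MvPolynomial (Fin r) K}
    (hp : p.IsHomogeneous d) (hg : g.IsHomogeneous d) :
    contract p g = 0 ↔ MvPolynomial.coeff 0 (contract p g) = 0 := by
  constructor
  · intro h
    rw [h, MvPolynomial.coeff_zero]
  · intro h
    have h0 : (contract p g).IsHomogeneous 0 := by
      have := isHomogeneous_contract hp hg
      simpa using this
    rw [isHomogeneous_zero_eq_C h0, h, map_zero]

theorem apolarForm_nondegenerate (d : ℕ) :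
    (apolarForm (K := K) (r := r) d).Nondegenerate := by
  refine ⟨?_, fun p hp => ?_⟩
  · intro p hp
    refine Subtype.ext (homog_eq_zero_of_contract p.2 fun D hD => ?_)
    rw [contract_eq_zero_iff hD p.2, coeff_zero_contract_comm]
    exact hp ⟨D, hD⟩
  · refine Subtype.ext (homog_eq_zero_of_contract p.2 fun D hD => ?_)
    rw [contract_eq_zero_iff hD p.2]
    exact hp ⟨D, hD⟩

theorem exists_A {d : ℕ} {f : MvPolynomial (Fin r) K} (hd : 0 < d) (hf : f.IsHomogeneous d)
    {g : MvPolynomial (Fin r) K} (hg : g.IsHomogeneous d)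
    (hDg : ∀ D : MvPolynomial (Fin r) K, D.IsHomogeneous (d - 1) → contract D f = 0 →
      contract D g = 0) :
    ∃ A ∈ Mf f, ∀ i, contract (X i) g = contract (rowOp A i) f := by
  classical
  have hd1 : d - (d - 1) = 1 := by omega
  set V1 := homogeneousSubmodule (Fin r) K 1 with hV1
  set Vd1 := homogeneousSubmodule (Fin r) K (d - 1) with hVd1
  have hcf : ∀ D : ↥Vd1, (contract (D : MvPolynomial (Fin r) K) f).IsHomogeneous 1 := by
    intro D
    have := isHomogeneous_contract D.2 hf
    rwa [hd1] at this
  have hcg : ∀ D : ↥Vd1, (contract (D : MvPolynomial (Fin r) K) g).IsHomogeneous 1 := by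
    intro D
    have := isHomogeneous_contract D.2 hg
    rwa [hd1] at this
  set Φ : ↥Vd1 →ₗ[K] ↥V1 :=
    { toFun := fun D => ⟨contract (D : MvPolynomial (Fin r) K) f, hcf D⟩
      map_add' := fun D E => Subtype.ext (by
        simp only [Submodule.coe_add]
        exact contract_add_left _ _ _)
      map_smul' := fun c D => Subtype.ext (by
        simp only [Submodule.coe_smul, RingHom.id_apply]
        exact contract_smul_left _ _ _) } with hΦ
  set Ψ : ↥Vd1 →ₗ[K] ↥V1 :=
    { toFun := fun D => ⟨contract (D : MvPolynomial (Fin r) K) g, hcg D⟩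
      map_add' := fun D E => Subtype.ext (by
        simp only [Submodule.coe_add]
        exact contract_add_left _ _ _)
      map_smul' := fun c D => Subtype.ext (by
        simp only [Submodule.coe_smul, RingHom.id_apply]
        exact contract_smul_left _ _ _) } with hΨ
  have hker : LinearMap.ker Φ ≤ LinearMap.ker Ψ := by
    intro D hD
    rw [LinearMap.mem_ker] at hD ⊢
    have h1 : contract (D : MvPolynomial (Fin r) K) f = 0 := congrArg Subtype.val hD
    exact Subtype.ext (hDg _ D.2 h1)
  set Φ' := (LinearMap.ker Φ).liftQ Φ le_rfl with hΦ'
  have hinj : LinearMap.ker Φ' = ⊥ := Submodule.ker_liftQ_eq_bot _ _ _ le_rfl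
  obtain ⟨π, hπ⟩ := Φ'.exists_leftInverse_of_injective hinj
  set L : ↥V1 →ₗ[K] ↥V1 := ((LinearMap.ker Φ).liftQ Ψ hker).comp π with hL
  have hLΦ : ∀ D : ↥Vd1, L (Φ D) = Ψ D := by
    intro D
    have h1 : Φ D = Φ' (Submodule.Quotient.mk D) := (Submodule.liftQ_apply _ _ _).symm
    rw [h1, hL, LinearMap.comp_apply]
    have h2 : π (Φ' (Submodule.Quotient.mk D)) = Submodule.Quotient.mk D :=
      LinearMap.congr_fun hπ (Submodule.Quotient.mk D)
    rw [h2, Submodule.liftQ_apply]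
  set XV : Fin r → ↥V1 := fun j => ⟨X j, MvPolynomial.isHomogeneous_X K j⟩ with hXV
  set A : Matrix (Fin r) (Fin r) K := Matrix.of fun k j =>
    MvPolynomial.coeff (Finsupp.single k 1) ((L (XV j) : MvPolynomial (Fin r) K)) with hA
  have hrep : ∀ v : ↥V1, v = ∑ j : Fin r,
      MvPolynomial.coeff (Finsupp.single j 1) (v : MvPolynomial (Fin r) K) • XV j := by
    intro v
    apply Subtype.ext
    push_cast
    exact isHomogeneous_one_rep v.2
  have hMform : ∀ (v : ↥V1) (k : Fin r),
      MvPolynomial.coeff (Finsupp.single k 1) ((L v : MvPolynomial (Fin r) K)) =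
        ∑ j : Fin r, A k j *
          MvPolynomial.coeff (Finsupp.single j 1) (v : MvPolynomial (Fin r) K) := by
    intro v k
    conv_lhs => rw [hrep v]
    rw [map_sum]
    push_cast
    rw [MvPolynomial.coeff_sum]
    refine Finset.sum_congr rfl fun j _ => ?_
    rw [LinearMap.map_smul, Submodule.coe_smul, MvPolynomial.coeff_smul, smul_eq_mul, mul_comm]
    rfl
  have hmain : ∀ k, contract (rowOp A k) f = contract (X k) g := by
    intro k
    rw [← sub_eq_zero]
    have hhom1 : (contract (rowOp A k) f).IsHomogeneous (d - 1) :=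
      isHomogeneous_contract (isHomogeneous_rowOp k) hf
    have hhom2 : (contract (X k) g).IsHomogeneous (d - 1) := by
      have := isHomogeneous_contract (MvPolynomial.isHomogeneous_X K k) hg
      rwa [show d - 1 = d - 1 from rfl] at this
    refine homog_eq_zero_of_contract (e := d - 1)
      (Submodule.sub_mem (homogeneousSubmodule (Fin r) K (d - 1)) hhom1 hhom2)
      fun D hD => ?_
    rw [contract_sub_right]
    have hDf1 : (contract D f).IsHomogeneous 1 := hcf ⟨D, hD⟩
    have hDg1 : (contract D g).IsHomogeneous 1 := hcg ⟨D, hD⟩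
    have e1 : contract D (contract (rowOp A k) f) =
        MvPolynomial.C (∑ j : Fin r, A k j *
          MvPolynomial.coeff (Finsupp.single j 1) (contract D f)) := by
      rw [← contract_mul, mul_comm, contract_mul]
      have : rowOp A k = ∑ j : Fin r, A k j • X j := rfl
      rw [this, contract_sum_left, map_sum]
      refine Finset.sum_congr rfl fun j _ => ?_
      rw [contract_smul_left, contract_X_of_homog_one hDf1 j, MvPolynomial.smul_eq_C_mul,
        ← MvPolynomial.C_mul]
    have e2 : contract D (contract (X k) g) =
        MvPolynomial.C (MvPolynomial.coeff (Finsupp.single k 1) (contract D g)) := by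
      rw [← contract_mul, mul_comm, contract_mul, contract_X_of_homog_one hDg1 k]
    rw [e1, e2]
    have e3 : contract D g = ((L (Φ ⟨D, hD⟩) : ↥V1) : MvPolynomial (Fin r) K) := by
      rw [hLΦ ⟨D, hD⟩]
      rfl
    rw [e3, hMform (Φ ⟨D, hD⟩) k]
    have e4 : ((Φ ⟨D, hD⟩ : ↥V1) : MvPolynomial (Fin r) K) = contract D f := rfl
    rw [e4, sub_self]
  refine ⟨A, ?_, fun i => (hmain i).symm⟩
  intro i j
  rw [contract_sub_left, contract_X_mul, contract_X_mul, hmain i, hmain j, ← contract_mul,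
    ← contract_mul, mul_comm, sub_self]

end FieldS7
end Lemmas7

section Lemmas8
open MvPolynomial Finsupp Module
variable {K : Type*} {r : ℕ}
variable [Field K] [CharZero K]

/-- The "orthogonal complement" of `g`: operators annihilating `g`. -/
def orthoSub (g : MvPolynomial (Fin r) K) : Submodule K (MvPolynomial (Fin r) K) where
  carrier := {p | contract p g = 0}
  zero_mem' := contract_zero_left g
  add_mem' := fun {a b} ha hb => by
    show contract (a + b) g = 0
    rw [contract_add_left, ha, hb, add_zero]
  smul_mem' := fun c a ha => by
    show contract (c • a) g = 0
    rw [contract_smul_left, ha, smul_zero]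

theorem imSet_eq {d : ℕ} {f : MvPolynomial (Fin r) K} (hd : 0 < d) (hf : f.IsHomogeneous d) :
    {g : MvPolynomial (Fin r) K | g.IsHomogeneous d ∧
        ∃ A ∈ Mf f, ∀ i, contract (X i) g = contract (rowOp A i) f} =
      {g : MvPolynomial (Fin r) K | g.IsHomogeneous d ∧
        ∀ p ∈ Submodule.span K {p : MvPolynomial (Fin r) K |
          ∃ i, ∃ D : MvPolynomial (Fin r) K,
            D.IsHomogeneous (d - 1) ∧ contract D f = 0 ∧ p = X i * D},
          contract p g = 0} := by
  ext g
  constructor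
  · rintro ⟨hg, A, hA, hAg⟩
    refine ⟨hg, fun p hp => ?_⟩
    have hle : Submodule.span K {p : MvPolynomial (Fin r) K | ∃ i, ∃ D : MvPolynomial (Fin r) K,
        D.IsHomogeneous (d - 1) ∧ contract D f = 0 ∧ p = X i * D} ≤ orthoSub g := by
      rw [Submodule.span_le]
      rintro p ⟨i, D, hD, hDf, rfl⟩
      show contract (X i * D) g = 0
      rw [mul_comm, contract_mul, hAg i, ← contract_mul, mul_comm, contract_mul, hDf,
        contract_zero_right]
    exact hle hp
  · rintro ⟨hg, hp⟩
    refine ⟨hg, exists_A hd hf hg fun D hD hDf => ?_⟩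
    have h1 : (contract D g).IsHomogeneous 1 := by
      have := isHomogeneous_contract hD hg
      rwa [show d - (d - 1) = 1 by omega] at this
    refine homog_eq_zero_of_contract_X one_pos h1 fun i => ?_
    rw [← contract_X_mul]
    exact hp _ (Submodule.subset_span ⟨i, D, hD, hDf, rfl⟩)

set_option synthInstance.maxHeartbeats 1000000 in
theorem main_counts {d : ℕ} {f : MvPolynomial (Fin r) K} (hd : 0 < d)
    (hf : f.IsHomogeneous d) (hf0 : f ≠ 0) :
    Set.finrank K {g : MvPolynomial (Fin r) K | g.IsHomogeneous d ∧
        ∃ A ∈ Mf f, ∀ i, contract (X i) g = contract (rowOp A i) f} =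
      1 + (Set.finrank K {D : MvPolynomial (Fin r) K |
          D.IsHomogeneous d ∧ contract D f = 0} -
        Set.finrank K {p : MvPolynomial (Fin r) K | ∃ i, ∃ D : MvPolynomial (Fin r) K,
          D.IsHomogeneous (d - 1) ∧ contract D f = 0 ∧ p = X i * D}) := by
  classical
  set Vd := homogeneousSubmodule (Fin r) K d with hVd
  set fv : ↥Vd := ⟨f, hf⟩ with hfv
  have hfv0 : fv ≠ 0 := fun h => hf0 (congrArg Subtype.val h)
  set B := apolarForm (K := K) (r := r) d with hB
  have hrefl := apolarForm_isRefl (K := K) (r := r) d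
  have hnd := apolarForm_nondegenerate (K := K) (r := r) d
  set Uset := {p : MvPolynomial (Fin r) K | ∃ i, ∃ D : MvPolynomial (Fin r) K,
    D.IsHomogeneous (d - 1) ∧ contract D f = 0 ∧ p = X i * D} with hUset
  set U := Submodule.span K Uset with hU
  have hU_ann : U ≤ annSub d f := by
    rw [hU, Submodule.span_le]
    rintro p ⟨i, D, hD, hDf, rfl⟩
    constructor
    · have := (MvPolynomial.isHomogeneous_X K i).mul hD
      rwa [show 1 + (d - 1) = d by omega] at this
    · rw [contract_X_mul, hDf, contract_zero_right]
  have hann_Vd : annSub d f ≤ Vd := fun D hD => hD.1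
  have hU_Vd : U ≤ Vd := le_trans hU_ann hann_Vd
  set U' := U.comap Vd.subtype with hU'
  set ann' := (annSub d f).comap Vd.subtype with hann'
  -- ann' is the orthogonal of the line spanned by f
  have hann_orth : ann' = B.orthogonal (K ∙ fv) := by
    ext p
    rw [hann', Submodule.mem_comap, LinearMap.BilinForm.mem_orthogonal_iff]
    constructor
    · intro hp n hn
      rw [Submodule.mem_span_singleton] at hn
      obtain ⟨c, rfl⟩ := hn
      rw [map_smul, LinearMap.smul_apply, smul_eq_mul]
      have h0 : B fv p = 0 := by
        rw [hB, apolarForm_apply, coeff_zero_contract_comm]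
        rw [← contract_eq_zero_iff (p.2 : (p : MvPolynomial (Fin r) K).IsHomogeneous d) hf]
        exact hp.2
      rw [h0, mul_zero]
    · intro h
      refine ⟨p.2, ?_⟩
      have h0 := h fv (Submodule.mem_span_singleton_self fv)
      rw [hB, apolarForm_apply, coeff_zero_contract_comm] at h0
      show contract (p : MvPolynomial (Fin r) K) f = 0
      rw [contract_eq_zero_iff (p.2 : (p : MvPolynomial (Fin r) K).IsHomogeneous d) hf]
      exact h0
  have hann_finrank : finrank K ↥(annSub d f) = finrank K ↥Vd - 1 := by
    have e1 : finrank K ↥ann' = finrank K ↥(annSub d f) :=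
      LinearEquiv.finrank_eq (Submodule.comapSubtypeEquivOfLe hann_Vd)
    have e2 : finrank K ↥ann' = finrank K ↥Vd - 1 := by
      rw [hann_orth, LinearMap.BilinForm.finrank_orthogonal hnd,
        finrank_span_singleton hfv0]
    omega
  have hU_finrank : finrank K ↥U' = finrank K ↥U :=
    LinearEquiv.finrank_eq (Submodule.comapSubtypeEquivOfLe hU_Vd)
  -- the image set is the orthogonal of U'
  have hIm : {g : MvPolynomial (Fin r) K | g.IsHomogeneous d ∧
      ∃ A ∈ Mf f, ∀ i, contract (X i) g = contract (rowOp A i) f} =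
      ((B.orthogonal U').map Vd.subtype : Set (MvPolynomial (Fin r) K)) := by
    rw [imSet_eq hd hf]
    ext g
    constructor
    · rintro ⟨hg, hp⟩
      refine Submodule.mem_map.mpr ⟨⟨g, hg⟩, ?_, rfl⟩
      rw [LinearMap.BilinForm.mem_orthogonal_iff]
      intro n hn
      rw [hB, apolarForm_apply]
      rw [Submodule.mem_comap] at hn
      rw [hp (n : MvPolynomial (Fin r) K) hn, MvPolynomial.coeff_zero]
    · rintro ⟨g', hg', rfl⟩
      refine ⟨g'.2, fun p hp => ?_⟩
      have hpVd : p ∈ Vd := hU_Vd hp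
      have hp' : (⟨p, hpVd⟩ : ↥Vd) ∈ U' := Submodule.mem_comap.mpr hp
      have h0 := (LinearMap.BilinForm.mem_orthogonal_iff.mp hg') _ hp'
      rw [hB, apolarForm_apply] at h0
      show contract p (g' : MvPolynomial (Fin r) K) = 0
      rw [contract_eq_zero_iff (hpVd : p.IsHomogeneous d) g'.2]
      exact h0
  have hImrank : Set.finrank K {g : MvPolynomial (Fin r) K | g.IsHomogeneous d ∧
      ∃ A ∈ Mf f, ∀ i, contract (X i) g = contract (rowOp A i) f} =
      finrank K ↥Vd - finrank K ↥U := by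
    rw [hIm, Set.finrank_submodule, Submodule.finrank_map_subtype_eq,
      LinearMap.BilinForm.finrank_orthogonal hnd, hU_finrank]
  -- numerics
  have hsetann : {D : MvPolynomial (Fin r) K | D.IsHomogeneous d ∧ contract D f = 0} =
      (annSub d f : Set (MvPolynomial (Fin r) K)) := rfl
  have hsetU : Set.finrank K Uset = finrank K ↥U := rfl
  have hle1 : finrank K ↥U ≤ finrank K ↥(annSub d f) := Submodule.finrank_mono hU_ann
  have hN1 : 1 ≤ finrank K ↥Vd := by
    have h2 := Submodule.finrank_mono (le_top (a := (K ∙ fv)))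
    rwa [finrank_span_singleton hfv0, finrank_top] at h2
  rw [hImrank, hsetann, Set.finrank_submodule, hann_finrank]
  omega

end Lemmas8

end

/-- Lemma 2.12. For `d > 0` and `0 ≠ f ∈ ℛ_d`:
(a) `M_f` is a `K`-linear subspace of `Mat_r(K)` containing the identity;
(b) `γ_f` is `K`-linear on `M_f`;
(c) `dim_K ker γ_f = r·β₁₁(f)` and `dim_K im γ_f = 1 + β₁d(f)`;
(d) `dim_K M_f = 1 + β₁d(f) + r·β₁₁(f)`.
Here `β₁₁(f) = dim_K ann_R(f)_1` and
`β₁d(f) = dim_K ann_R(f)_d − dim_K (R_1·ann_R(f)_{d−1})`. -/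
theorem Mf_dimension {K : Type*} [Field K] [CharZero K] {r d : ℕ} (hd : 0 < d)
    (f : MvPolynomial (Fin r) K) (hf : f.IsHomogeneous d) (hf0 : f ≠ 0) :
    (1 ∈ Mf f ∧ ∀ a b : K, ∀ A ∈ Mf f, ∀ B ∈ Mf f, a • A + b • B ∈ Mf f) ∧
    (∀ a b : K, ∀ A ∈ Mf f, ∀ B ∈ Mf f,
      gammaf d f (a • A + b • B) = a • gammaf d f A + b • gammaf d f B) ∧
    (Set.finrank K {A : Matrix (Fin r) (Fin r) K |
        A ∈ Mf f ∧ ∀ i, contract (rowOp A i) f = 0} =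
      r * Set.finrank K {D : MvPolynomial (Fin r) K |
        D.IsHomogeneous 1 ∧ contract D f = 0}) ∧
    (Set.finrank K {g : MvPolynomial (Fin r) K | g.IsHomogeneous d ∧
        ∃ A ∈ Mf f, ∀ i, contract (X i) g = contract (rowOp A i) f} =
      1 + (Set.finrank K {D : MvPolynomial (Fin r) K |
          D.IsHomogeneous d ∧ contract D f = 0} -
        Set.finrank K {p : MvPolynomial (Fin r) K | ∃ i, ∃ D : MvPolynomial (Fin r) K,
          D.IsHomogeneous (d - 1) ∧ contract D f = 0 ∧ p = X i * D})) ∧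
    (Set.finrank K (Mf f) =
      1 + (Set.finrank K {D : MvPolynomial (Fin r) K |
          D.IsHomogeneous d ∧ contract D f = 0} -
        Set.finrank K {p : MvPolynomial (Fin r) K | ∃ i, ∃ D : MvPolynomial (Fin r) K,
          D.IsHomogeneous (d - 1) ∧ contract D f = 0 ∧ p = X i * D}) +
      r * Set.finrank K {D : MvPolynomial (Fin r) K |
        D.IsHomogeneous 1 ∧ contract D f = 0}) := by
  classical
  have hann1 : Set.finrank K {D : MvPolynomial (Fin r) K |
      D.IsHomogeneous 1 ∧ contract D f = 0} = Module.finrank K ↥(annSub 1 f) := by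
    have h1 : {D : MvPolynomial (Fin r) K | D.IsHomogeneous 1 ∧ contract D f = 0} =
        (annSub 1 f : Set (MvPolynomial (Fin r) K)) := rfl
    rw [h1, Set.finrank_submodule]
  refine ⟨⟨one_mem_Mf f, fun a b A hA B hB =>
      Submodule.add_mem (MfSub f) (Submodule.smul_mem _ _ hA) (Submodule.smul_mem _ _ hB)⟩,
    fun a b A hA B hB => gammaf_linear hd hf a b hA hB, ?_, main_counts hd hf hf0, ?_⟩
  · rw [kerSet_eq f, Set.finrank_submodule, kerSub_finrank f, hann1]
  · set γl : ↥(MfSub f) →ₗ[K] MvPolynomial (Fin r) K :=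
      { toFun := fun A => gammaf d f A.1
        map_add' := fun A B => by
          have h := gammaf_linear hd hf 1 1 A.2 B.2
          simpa using h
        map_smul' := fun c A => by
          have h := gammaf_linear hd hf c 0 A.2 (Submodule.zero_mem (MfSub f))
          simpa using h } with hγl
    have hrange : (LinearMap.range γl : Set (MvPolynomial (Fin r) K)) =
        {g : MvPolynomial (Fin r) K | g.IsHomogeneous d ∧
          ∃ A ∈ Mf f, ∀ i, contract (X i) g = contract (rowOp A i) f} := by
      ext g
      constructor
      · rintro ⟨A, rfl⟩
        exact ⟨(gammaf_spec hd hf A.2).1, A.1, A.2, fun i => (gammaf_spec hd hf A.2).2 i⟩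
      · rintro ⟨hg, A, hA, hAg⟩
        exact ⟨⟨A, hA⟩, gammaf_unique hd hf hA hg hAg⟩
    have hker : LinearMap.ker γl = (kerSub f).comap (MfSub f).subtype := by
      ext A
      rw [LinearMap.mem_ker, Submodule.mem_comap]
      exact gammaf_zero_iff hd hf A.2
    have hrn := LinearMap.finrank_range_add_finrank_ker γl
    have hkerrank : Module.finrank K ↥(LinearMap.ker γl) = Module.finrank K ↥(kerSub f) := by
      rw [hker]
      exact LinearEquiv.finrank_eq (Submodule.comapSubtypeEquivOfLe (kerSub_le_Mf f))
    have hMfSet : Set.finrank K (Mf f) = Module.finrank K ↥(MfSub f) :=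
      Set.finrank_submodule (MfSub f)
    have hrangerank : Module.finrank K ↥(LinearMap.range γl) =
        Set.finrank K {g : MvPolynomial (Fin r) K | g.IsHomogeneous d ∧
          ∃ A ∈ Mf f, ∀ i, contract (X i) g = contract (rowOp A i) f} := by
      rw [← Set.finrank_submodule (LinearMap.range γl), hrange]
    have hmc := main_counts hd hf hf0
    have hks := kerSub_finrank f
    rw [hMfSet, ← hrn, hrangerank, hmc, hkerrank, hks, hann1]

end Kleppe
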